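/- If A ≡ 0, then the only bounded solution ψ of ψ'' - W''(q(z))·ψ = 0 with ψ(0) = 0 is ψ ≡ 0; hence ψ is a constant multiple of q' and the condition ψ(0)=0 forces the constant to be zero. -/

import Mathlib

open Real Filter Topology

noncomputable def q (z : ℝ) : ℝ := (1 - Real.tanh z) / 2

/-- W''(s) for W(s) = (1/2)s²(1-s)². -/
noncomputable def Wpp (s : ℝ) : ℝ := 6*s^2 - 6*s + 1

/-- Comparison subsolution `w(z) = sinh z / sqrt (cosh z)`. -/
noncomputable def WW0 (z : ℝ) : ℝ := Real.sinh z * Real.cosh z ^ (-(1:ℝ)/2)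
/-- Its derivative. -/
noncomputable def WW1 (z : ℝ) : ℝ :=
  Real.cosh z ^ ((1:ℝ)/2) - (1/2) * Real.sinh z ^ 2 * Real.cosh z ^ (-(3:ℝ)/2)
/-- Its second derivative. -/
noncomputable def WW2 (z : ℝ) : ℝ :=
  -(1/2) * Real.sinh z * Real.cosh z ^ (-(1:ℝ)/2)
    + (3/4) * Real.sinh z ^ 3 * Real.cosh z ^ (-(5:ℝ)/2)

lemma coshe1 (z : ℝ) : Real.cosh z ^ ((1:ℝ)/2)
    = Real.cosh z * Real.cosh z ^ (-(1:ℝ)/2) := by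
  have hc := Real.cosh_pos z
  rw [show ((1:ℝ)/2) = (-(1:ℝ)/2) + 1 by norm_num, Real.rpow_add_one hc.ne', mul_comm]

lemma coshe3 (z : ℝ) : Real.cosh z ^ (-(3:ℝ)/2)
    = Real.cosh z ^ (-(1:ℝ)/2) / Real.cosh z := by
  have hc := Real.cosh_pos z
  rw [show (-(3:ℝ)/2) = (-(1:ℝ)/2) + (-1) by norm_num, Real.rpow_add hc,
    Real.rpow_neg_one]
  exact (div_eq_mul_inv _ _).symm

lemma coshe5 (z : ℝ) : Real.cosh z ^ (-(5:ℝ)/2)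
    = Real.cosh z ^ (-(1:ℝ)/2) / Real.cosh z ^ 2 := by
  have hc := Real.cosh_pos z
  rw [show (-(5:ℝ)/2) = (-(1:ℝ)/2) + (-2) by norm_num, Real.rpow_add hc,
    show ((-2:ℝ)) = ((-2 : ℤ) : ℝ) by norm_num, Real.rpow_intCast]
  norm_num
  exact (div_eq_mul_inv _ _).symm

lemma WW0_hasDeriv (z : ℝ) : HasDerivAt WW0 (WW1 z) z := by
  have hc := Real.cosh_pos z
  have h1 : HasDerivAt (fun z => Real.cosh z ^ (-(1:ℝ)/2))
      ((-(1:ℝ)/2) * Real.cosh z ^ ((-(1:ℝ)/2) - 1) * Real.sinh z) z :=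
    (Real.hasDerivAt_rpow_const (p := -(1:ℝ)/2) (Or.inl hc.ne')).comp z (Real.hasDerivAt_cosh z)
  have h2 := (Real.hasDerivAt_sinh z).mul h1
  refine h2.congr_deriv ?_
  symm
  rw [show ((-(1:ℝ)/2) - 1) = (-(3:ℝ)/2) by norm_num]
  rw [WW1, coshe1, coshe3]
  field_simp
  ring

lemma WW1_hasDeriv (z : ℝ) : HasDerivAt WW1 (WW2 z) z := by
  have hc := Real.cosh_pos z
  have h1 : HasDerivAt (fun z => Real.cosh z ^ ((1:ℝ)/2))
      (((1:ℝ)/2) * Real.cosh z ^ (((1:ℝ)/2) - 1) * Real.sinh z) z :=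
    (Real.hasDerivAt_rpow_const (p := (1:ℝ)/2) (Or.inl hc.ne')).comp z (Real.hasDerivAt_cosh z)
  have h2 : HasDerivAt (fun z => Real.cosh z ^ (-(3:ℝ)/2))
      ((-(3:ℝ)/2) * Real.cosh z ^ ((-(3:ℝ)/2) - 1) * Real.sinh z) z :=
    (Real.hasDerivAt_rpow_const (p := -(3:ℝ)/2) (Or.inl hc.ne')).comp z (Real.hasDerivAt_cosh z)
  have h3 : HasDerivAt (fun z => Real.sinh z ^ 2) (2 * Real.sinh z ^ 1 * Real.cosh z) z :=
    (Real.hasDerivAt_sinh z).pow 2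
  have h4 := h1.sub ((h3.const_mul ((1:ℝ)/2)).mul h2)
  refine h4.congr_deriv ?_
  symm
  rw [show ((1:ℝ)/2 - 1) = (-(1:ℝ)/2) by norm_num,
    show ((-(3:ℝ)/2) - 1) = (-(5:ℝ)/2) by norm_num]
  rw [WW2, coshe3, coshe5]
  field_simp
  ring

lemma tanh_sq_le_one (z : ℝ) : Real.tanh z ^ 2 ≤ 1 := by
  have hc := Real.cosh_pos z
  rw [Real.tanh_eq_sinh_div_cosh, div_pow, div_le_one (by positivity)]
  rw [Real.sinh_sq]
  linarith

lemma Vq_eq (z : ℝ) : Wpp (q z) = (3 * Real.tanh z ^ 2 - 1) / 2 := by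
  rw [Wpp, q]; ring

lemma comparison (z : ℝ) :
    Wpp (q z) * WW0 z - WW2 z = (3/4) * Real.tanh z ^ 2 * WW0 z := by
  have hc := Real.cosh_pos z
  rw [Vq_eq, WW0, WW2, coshe5, Real.tanh_eq_sinh_div_cosh]
  field_simp
  ring

lemma WW0_zero : WW0 0 = 0 := by simp [WW0]

lemma WW0_nonneg {z : ℝ} (hz : 0 ≤ z) : 0 ≤ WW0 z := by
  have := Real.cosh_pos z
  exact mul_nonneg (Real.sinh_nonneg_iff.2 hz) (Real.rpow_pos_of_pos this _).le

lemma WW0_pos {z : ℝ} (hz : 0 < z) : 0 < WW0 z := by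
  have := Real.cosh_pos z
  exact mul_pos (Real.sinh_pos_iff.2 hz) (Real.rpow_pos_of_pos this _)

lemma WW0_sq (z : ℝ) : WW0 z ^ 2 = Real.cosh z - 1 / Real.cosh z := by
  have hc := Real.cosh_pos z
  have hu : (Real.cosh z ^ (-(1:ℝ)/2)) ^ 2 = 1 / Real.cosh z := by
    rw [← Real.rpow_natCast (Real.cosh z ^ (-(1:ℝ)/2)) 2, ← Real.rpow_mul hc.le]
    norm_num [Real.rpow_neg_one]
  rw [WW0, mul_pow, hu, Real.sinh_sq]
  field_simp

lemma key (ψ : ℝ → ℝ) (hψ : ContDiff ℝ 2 ψ) (C : ℝ) (hb : ∀ z, |ψ z| ≤ C)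
    (hode : ∀ z, deriv (deriv ψ) z = Wpp (q z) * ψ z) (h0 : ψ 0 = 0)
    (hd : 0 < deriv ψ 0) : False := by
  have hdiff : Differentiable ℝ ψ := hψ.differentiable (by norm_num)
  have hdiff1 : Differentiable ℝ (deriv ψ) := by
    have := (contDiff_succ_iff_deriv (n := 1)).mp (by exact_mod_cast hψ)
    exact this.2.2.differentiable (by norm_num)
  have hD1 : ∀ z, HasDerivAt ψ (deriv ψ z) z := fun z => (hdiff z).hasDerivAt
  have hD2 : ∀ z, HasDerivAt (deriv ψ) (Wpp (q z) * ψ z) z := fun z =>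
    hode z ▸ (hdiff1 z).hasDerivAt
  -- ψ is positive on a right neighborhood of 0
  obtain ⟨ε, hε, hψpos⟩ : ∃ ε > 0, ∀ z ∈ Set.Ioc 0 ε, 0 < ψ z := by
    have hslope := hasDerivAt_iff_tendsto_slope.mp (hD1 0)
    have hev : ∀ᶠ z in 𝓝[≠] (0:ℝ), 0 < slope ψ 0 z :=
      hslope.eventually (eventually_gt_nhds hd)
    have hev' : ∀ᶠ z in 𝓝[>] (0:ℝ), 0 < slope ψ 0 z :=
      hev.filter_mono (nhdsWithin_mono 0 (fun x hx => ne_of_gt hx))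
    obtain ⟨ε, hε, h⟩ := (nhdsGT_basis (0:ℝ)).eventually_iff.mp hev'
    refine ⟨ε/2, by linarith, fun z hz => ?_⟩
    have hz1 : z ∈ Set.Ioo 0 ε := ⟨hz.1, lt_of_le_of_lt hz.2 (by linarith)⟩
    have := h hz1
    rw [slope_def_field] at this
    have : 0 < (ψ z - ψ 0) / (z - 0) := by
      simpa [div_eq_mul_inv] using this
    rw [h0, sub_zero, sub_zero] at this
    have := mul_pos this hz.1
    rwa [div_mul_cancel₀ _ (ne_of_gt hz1.1)] at this
  -- The Wronskian-type function J
  set J : ℝ → ℝ := fun z => deriv ψ z * WW0 z - ψ z * WW1 z with hJ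
  have hJd : ∀ z, HasDerivAt J (ψ z * ((3/4) * Real.tanh z ^ 2 * WW0 z)) z := by
    intro z
    have h := ((hD2 z).mul (WW0_hasDeriv z)).sub ((hD1 z).mul (WW1_hasDeriv z))
    refine h.congr_deriv ?_
    symm
    linear_combination (-ψ z) * comparison z
  have hJ0 : J 0 = 0 := by simp [hJ, WW0_zero, h0]
  -- monotonicity of J on intervals where ψ ≥ 0
  have hJmono : ∀ c : ℝ, 0 < c → (∀ y ∈ Set.Ioo (0:ℝ) c, 0 ≤ ψ y) →
      ∀ z ∈ Set.Icc (0:ℝ) c, 0 ≤ J z := by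
    intro c hc hnn z hz
    have hmono : MonotoneOn J (Set.Icc 0 c) := by
      apply monotoneOn_of_deriv_nonneg (convex_Icc 0 c)
      · have hWW0c : Continuous WW0 :=
          continuous_iff_continuousAt.2 (fun x => (WW0_hasDeriv x).continuousAt)
        have hWW1c : Continuous WW1 :=
          continuous_iff_continuousAt.2 (fun x => (WW1_hasDeriv x).continuousAt)
        exact ((hdiff1.continuous.mul hWW0c).sub
          (hdiff.continuous.mul hWW1c)).continuousOn
      · intro x hx
        exact (hJd x).differentiableAt.differentiableWithinAt
      · intro x hx
        rw [interior_Icc] at hx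
        rw [(hJd x).deriv]
        have h1 : 0 ≤ ψ x := hnn x hx
        have h2 : 0 ≤ WW0 x := WW0_nonneg hx.1.le
        positivity
    have := hmono (Set.left_mem_Icc.2 hc.le) hz hz.1
    rwa [hJ0] at this
  -- ratio ψ / WW0 is monotone where J ≥ 0
  have hratio : ∀ a c : ℝ, 0 < a → a ≤ c → (∀ z ∈ Set.Icc a c, 0 ≤ J z) →
      ψ a / WW0 a ≤ ψ c / WW0 c := by
    intro a c ha hac hJnn
    have hmono : MonotoneOn (fun z => ψ z / WW0 z) (Set.Icc a c) := by
      apply monotoneOn_of_deriv_nonneg (convex_Icc a c)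
      · apply ContinuousOn.div (hdiff.continuous.continuousOn)
          ((continuousOn_of_forall_continuousAt (fun x _ => (WW0_hasDeriv x).continuousAt)))
        intro x hx
        exact (WW0_pos (lt_of_lt_of_le ha hx.1)).ne'
      · intro x hx
        rw [interior_Icc] at hx
        exact (((hD1 x).div (WW0_hasDeriv x)
          (WW0_pos (lt_trans ha hx.1)).ne')).differentiableAt.differentiableWithinAt
      · intro x hx
        rw [interior_Icc] at hx
        have hx0 : 0 < x := lt_trans ha hx.1
        rw [show deriv (fun z => ψ z / WW0 z) x = _ from ((hD1 x).div (WW0_hasDeriv x) (WW0_pos hx0).ne').deriv]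
        apply div_nonneg _ (sq_nonneg _)
        exact hJnn x ⟨hx.1.le, hx.2.le⟩
    exact hmono (Set.left_mem_Icc.2 hac) (Set.right_mem_Icc.2 hac) hac
  -- ψ is positive on all of (0, ∞)
  have hpos : ∀ z, 0 < z → 0 < ψ z := by
    by_contra h
    push_neg at h
    obtain ⟨z1, hz1, hle⟩ := h
    have hz1ε : ε < z1 := by
      by_contra h'
      push_neg at h'
      exact absurd (hψpos z1 ⟨hz1, h'⟩) (not_lt.2 hle)
    set S : Set ℝ := {z | z ∈ Set.Icc ε z1 ∧ ψ z ≤ 0} with hS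
    have hSclosed : IsClosed S := by
      have : S = Set.Icc ε z1 ∩ ψ ⁻¹' (Set.Iic 0) := rfl
      rw [this]
      exact isClosed_Icc.inter (isClosed_Iic.preimage hdiff.continuous)
    have hSne : S.Nonempty := ⟨z1, ⟨hz1ε.le, le_refl _⟩, hle⟩
    have hSbdd : BddBelow S := ⟨ε, fun x hx => hx.1.1⟩
    set c := sInf S with hc
    have hcS : c ∈ S := hSclosed.csInf_mem hSne hSbdd
    have hεc : ε < c := by
      rcases lt_or_eq_of_le hcS.1.1 with h' | h'
      · exact h'
      · exact absurd (hψpos c ⟨by linarith [hε], h'.symm.le⟩) (not_lt.2 hcS.2)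
    have hnn : ∀ y ∈ Set.Ioo (0:ℝ) c, 0 ≤ ψ y := by
      intro y hy
      rcases le_or_gt y ε with h' | h'
      · exact (hψpos y ⟨hy.1, h'⟩).le
      · by_contra hneg
        push_neg at hneg
        have hyS : y ∈ S := ⟨⟨h'.le, by linarith [hcS.1.2, hy.2]⟩, hneg.le⟩
        exact absurd (csInf_le hSbdd hyS) (not_le.2 hy.2)
    have hJnn := hJmono c (by linarith) hnn
    have hψε := hψpos ε ⟨hε, le_refl _⟩
    have := hratio ε c hε hεc.le (fun z hz => hJnn z ⟨by linarith [hz.1], hz.2⟩)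
    have hposc : 0 < ψ c / WW0 c :=
      lt_of_lt_of_le (div_pos hψε (WW0_pos hε)) this
    have : 0 < ψ c := by
      have h2 := WW0_pos (by linarith : (0:ℝ) < c)
      by_contra hcon
      push_neg at hcon
      exact absurd hposc (not_lt.2 (div_nonpos_of_nonpos_of_nonneg hcon h2.le))
    linarith [hcS.2]
  -- hence J ≥ 0 everywhere on [0, ∞), so ψ/WW0 is increasing, so ψ grows like WW0
  have hJall : ∀ z, 0 ≤ z → 0 ≤ J z := by
    intro z hz
    rcases eq_or_lt_of_le hz with h' | h'
    · rw [← h', hJ0]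
    · exact hJmono z h' (fun y hy => (hpos y hy.1).le) z ⟨hz, le_refl _⟩
  set m := ψ ε / WW0 ε with hm
  have hmpos : 0 < m := div_pos (hψpos ε ⟨hε, le_refl _⟩) (WW0_pos hε)
  have hgrow : ∀ z, ε ≤ z → m * WW0 z ≤ ψ z := by
    intro z hz
    have := hratio ε z hε hz (fun y hy => hJall y (by linarith [hy.1]))
    have h2 := WW0_pos (lt_of_lt_of_le hε hz)
    calc m * WW0 z ≤ (ψ z / WW0 z) * WW0 z := by
          apply mul_le_mul_of_nonneg_right this h2.le
      _ = ψ z := by field_simp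
  -- contradiction with boundedness
  have hWbdd : ∀ z, ε ≤ z → WW0 z ≤ C / m := by
    intro z hz
    have h1 := hgrow z hz
    have h2 := (abs_le.1 (hb z)).2
    rw [le_div_iff₀ hmpos]
    linarith [mul_comm m (WW0 z)]
  set z0 := max ε ((C/m)^2 + 1) with hz0
  have hz0ε : ε ≤ z0 := le_max_left _ _
  have h1 := hWbdd z0 hz0ε
  have h2 : WW0 z0 ^ 2 ≤ (C/m)^2 := by
    have h3 : 0 ≤ WW0 z0 := WW0_nonneg (by linarith)
    nlinarith
  rw [WW0_sq] at h2
  have hc1 : 1 ≤ Real.cosh z0 := Real.one_le_cosh z0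
  have h4 : Real.cosh z0 ≤ (C/m)^2 + 1 := by
    have : 1 / Real.cosh z0 ≤ 1 := by
      rw [div_le_one (by linarith)]; linarith
    linarith
  have h5 : z0 < Real.sinh z0 := Real.self_lt_sinh_iff.mpr (by linarith [hε, hz0ε])
  have h6 : Real.sinh z0 < Real.cosh z0 := Real.sinh_lt_cosh z0
  have h7 : (C/m)^2 + 1 ≤ z0 := le_max_right _ _
  linarith

theorem stmt_11 (ψ : ℝ → ℝ)
    (hψ : ContDiff ℝ 2 ψ)
    (hbdd : ∃ C, ∀ z, |ψ z| ≤ C)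
    (hode : ∀ z, deriv (deriv ψ) z - Wpp (q z) * ψ z = 0)
    (h0 : ψ 0 = 0) :
    ∀ z, ψ z = 0 := by
  obtain ⟨C, hb⟩ := hbdd
  have hode' : ∀ z, deriv (deriv ψ) z = Wpp (q z) * ψ z := by
    intro z; have := hode z; linarith
  have hdiff : Differentiable ℝ ψ := hψ.differentiable (by norm_num)
  have hdiff1 : Differentiable ℝ (deriv ψ) := by
    have := (contDiff_succ_iff_deriv (n := 1)).mp (by exact_mod_cast hψ)
    exact this.2.2.differentiable (by norm_num)
  have hD1 : ∀ z, HasDerivAt ψ (deriv ψ z) z := fun z => (hdiff z).hasDerivAt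
  have hD2 : ∀ z, HasDerivAt (deriv ψ) (Wpp (q z) * ψ z) z := fun z =>
    hode' z ▸ (hdiff1 z).hasDerivAt
  rcases lt_trichotomy (deriv ψ 0) 0 with hd | hd | hd
  · -- apply key to -ψ
    exfalso
    have hneg : ContDiff ℝ 2 (fun z => -ψ z) := hψ.neg
    have hder : deriv (fun z => -ψ z) = fun z => -deriv ψ z := by
      funext z; exact deriv.neg
    apply key (fun z => -ψ z) hneg C (fun z => by simpa using hb z)
    · intro z
      rw [hder]
      have : deriv (fun z => -deriv ψ z) z = -(deriv (deriv ψ) z) := deriv.neg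
      rw [this, hode' z]; ring
    · simp [h0]
    · rw [hder]; simpa using hd
  · -- Gronwall: ψ ≡ 0
    set g : ℝ → ℝ := fun z => ψ z ^ 2 + deriv ψ z ^ 2 with hg
    have hg0 : g 0 = 0 := by simp [hg, h0, hd]
    have hgd : ∀ z, HasDerivAt g (2 * (1 + Wpp (q z)) * (ψ z * deriv ψ z)) z := by
      intro z
      have h := ((hD1 z).pow 2).add ((hD2 z).pow 2)
      refine h.congr_deriv ?_
      ring
    have hVb : ∀ z, -2 ≤ 1 + Wpp (q z) ∧ 1 + Wpp (q z) ≤ 2 := by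
      intro z
      rw [Vq_eq]
      constructor
      · nlinarith [sq_nonneg (Real.tanh z)]
      · nlinarith [tanh_sq_le_one z]
    have hgle : ∀ z, deriv g z ≤ 2 * g z ∧ -(2 * g z) ≤ deriv g z := by
      intro z
      rw [(hgd z).deriv]
      obtain ⟨hV1, hV2⟩ := hVb z
      have hgz : g z = ψ z ^ 2 + deriv ψ z ^ 2 := rfl
      rcases le_or_gt 0 (ψ z * deriv ψ z) with h | h
      · constructor <;> nlinarith [sq_nonneg (ψ z - deriv ψ z), sq_nonneg (ψ z + deriv ψ z)]
      · constructor <;> nlinarith [sq_nonneg (ψ z - deriv ψ z), sq_nonneg (ψ z + deriv ψ z)]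
    have hgnn : ∀ z, 0 ≤ g z := fun z => by positivity
    have hzero : ∀ z, g z = 0 := by
      intro z
      rcases le_or_gt 0 z with hz | hz
      · -- use h1 = g * exp(-2z), antitone
        set h1 : ℝ → ℝ := fun z => g z * Real.exp (-(2*z)) with hh1
        have hd1 : ∀ x, HasDerivAt h1
            (deriv g x * Real.exp (-(2*x)) + g x * (Real.exp (-(2*x)) * (-2))) x := by
          intro x
          have hinner : HasDerivAt (fun x : ℝ => -(2*x)) (-2) x := by
            exact (((hasDerivAt_id x).const_mul (2:ℝ)).neg).congr_deriv (by norm_num)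
          have hexp := (Real.hasDerivAt_exp (-(2*x))).comp x hinner
          exact ((hgd x).deriv ▸ (hgd x)).mul hexp
        have hanti : Antitone h1 := by
          apply antitone_of_deriv_nonpos
          · exact fun x => (hd1 x).differentiableAt
          · intro x
            rw [(hd1 x).deriv]
            have h2 := (hgle x).1
            have h3 := hgnn x
            have h4 := Real.exp_pos (-(2*x))
            nlinarith
        have := hanti hz
        rw [hh1] at this
        simp only [hg0, zero_mul, mul_zero] at this
        have h5 := Real.exp_pos (-(2*z))
        have h6 := hgnn z
        nlinarith [this]
      · -- use h2 = g * exp(2z), monotone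
        set h2 : ℝ → ℝ := fun z => g z * Real.exp (2*z) with hh2
        have hd2' : ∀ x, HasDerivAt h2
            (deriv g x * Real.exp (2*x) + g x * (Real.exp (2*x) * 2)) x := by
          intro x
          have hinner : HasDerivAt (fun x : ℝ => 2*x) (2:ℝ) x := by
            exact ((hasDerivAt_id x).const_mul (2:ℝ)).congr_deriv (by norm_num)
          have hexp := (Real.hasDerivAt_exp (2*x)).comp x hinner
          exact ((hgd x).deriv ▸ (hgd x)).mul hexp
        have hmono : Monotone h2 := by
          apply monotone_of_deriv_nonneg
          · exact fun x => (hd2' x).differentiableAt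
          · intro x
            rw [(hd2' x).deriv]
            have h3 := (hgle x).2
            have h4 := hgnn x
            have h5 := Real.exp_pos (2*x)
            nlinarith
        have := hmono hz.le
        rw [hh2] at this
        simp only [hg0, zero_mul, mul_zero] at this
        have h5 := Real.exp_pos (2*z)
        have h6 := hgnn z
        nlinarith [this]
    intro z
    have := hzero z
    have hgz : g z = ψ z ^ 2 + deriv ψ z ^ 2 := rfl
    have h7 : ψ z ^ 2 = 0 := by nlinarith [sq_nonneg (ψ z), sq_nonneg (deriv ψ z)]
    exact sq_eq_zero_iff.mp h7
  · exact absurd (key ψ hψ C hb hode' h0 hd) (fun h => h)
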